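/- Let A be a bialgebra over a commutative ring R with comultiplication Δ, let x ∈ A be a grouplike element, and write Lₓ : A → A for left multiplication by x. Let Ω : A → A be an R-linear map satisfying (Ω ⊗ id) ∘ Δ = (id ⊗ Lₓ) ∘ Δ ∘ Ω and (id ⊗ Ω) ∘ Δ = (Lₓ ⊗ id) ∘ Δ ∘ Ω (an Ω-process associated to x). Then the map Λ := Lₓ ∘ Ω (i.e., a ↦ x·Ω(a)) satisfies Δ ∘ Λ = (id ⊗ Λ) ∘ Δ and Δ ∘ Λ = (Λ ⊗ id) ∘ Δ; that is, Λ is simultaneously a morphism for the left and the right coactions of A on itself (a morphism of left and right G-modules, for G = Spec A). -/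

import Mathlib

open TensorProduct

/-- An element `x` of a bialgebra is grouplike if `Δ x = x ⊗ x` and `ε x = 1`. -/
def IsGroupLikeElem' (R : Type*) {A : Type*} [CommRing R] [Ring A] [Bialgebra R A]
    (x : A) : Prop :=
  Coalgebra.comul (R := R) x = x ⊗ₜ[R] x ∧ Coalgebra.counit (R := R) x = 1

lemma tmul_mul_eq_map {R A : Type*} [CommRing R] [Ring A] [Algebra R A] (x : A)
    (t : A ⊗[R] A) :
    (x ⊗ₜ[R] x) * t = TensorProduct.map (LinearMap.mulLeft R x) (LinearMap.mulLeft R x) t := by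
  induction t using TensorProduct.induction_on with
  | zero => simp
  | tmul a b => simp [Algebra.TensorProduct.tmul_mul_tmul]
  | add s t hs ht => simp [mul_add, hs, ht]

theorem omega_process_equivariant {R A : Type*} [CommRing R] [Ring A] [Bialgebra R A]
    (x : A) (hx : IsGroupLikeElem' R x) (Ω : A →ₗ[R] A)
    -- `Ω` is an `Ω`-process associated to `x`:
    -- `(Ω ⊗ id) ∘ Δ = (id ⊗ Lₓ) ∘ Δ ∘ Ω`
    (hΩ₁ : TensorProduct.map Ω LinearMap.id ∘ₗ Coalgebra.comul =
      TensorProduct.map LinearMap.id (LinearMap.mulLeft R x) ∘ₗ Coalgebra.comul ∘ₗ Ω)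
    -- `(id ⊗ Ω) ∘ Δ = (Lₓ ⊗ id) ∘ Δ ∘ Ω`
    (hΩ₂ : TensorProduct.map LinearMap.id Ω ∘ₗ Coalgebra.comul =
      TensorProduct.map (LinearMap.mulLeft R x) LinearMap.id ∘ₗ Coalgebra.comul ∘ₗ Ω) :
    -- `Λ := Lₓ ∘ Ω` satisfies `Δ ∘ Λ = (id ⊗ Λ) ∘ Δ` and `Δ ∘ Λ = (Λ ⊗ id) ∘ Δ`
    Coalgebra.comul ∘ₗ (LinearMap.mulLeft R x ∘ₗ Ω) =
      TensorProduct.map LinearMap.id (LinearMap.mulLeft R x ∘ₗ Ω) ∘ₗ Coalgebra.comul ∧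
    Coalgebra.comul ∘ₗ (LinearMap.mulLeft R x ∘ₗ Ω) =
      TensorProduct.map (LinearMap.mulLeft R x ∘ₗ Ω) LinearMap.id ∘ₗ Coalgebra.comul := by
  have hcm : ∀ b : A, Coalgebra.comul (R := R) (x * b) =
      TensorProduct.map (LinearMap.mulLeft R x) (LinearMap.mulLeft R x)
        (Coalgebra.comul (R := R) b) := by
    intro b
    rw [← tmul_mul_eq_map, ← hx.1]
    have := map_mul (Bialgebra.comulAlgHom R A) x b
    simp only [Bialgebra.comulAlgHom_apply] at this
    exact this
  have hmap : TensorProduct.map (LinearMap.mulLeft R x) (LinearMap.mulLeft R x)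
      = (TensorProduct.map LinearMap.id (LinearMap.mulLeft R x)) ∘ₗ
        (TensorProduct.map (LinearMap.mulLeft R x) LinearMap.id) := by
    rw [← TensorProduct.map_comp]; simp
  have hmap' : TensorProduct.map (LinearMap.mulLeft R x) (LinearMap.mulLeft R x)
      = (TensorProduct.map (LinearMap.mulLeft R x) LinearMap.id) ∘ₗ
        (TensorProduct.map LinearMap.id (LinearMap.mulLeft R x)) := by
    rw [← TensorProduct.map_comp]; simp
  constructor
  · ext a
    have h2 := congrFun (congrArg DFunLike.coe hΩ₂) a
    simp only [LinearMap.comp_apply] at h2 ⊢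
    rw [LinearMap.mulLeft_apply, hcm (Ω a), hmap, LinearMap.comp_apply, ← h2,
      ← LinearMap.comp_apply, ← TensorProduct.map_comp]
    simp
  · ext a
    have h1 := congrFun (congrArg DFunLike.coe hΩ₁) a
    simp only [LinearMap.comp_apply] at h1 ⊢
    rw [LinearMap.mulLeft_apply, hcm (Ω a), hmap', LinearMap.comp_apply, ← h1,
      ← LinearMap.comp_apply, ← TensorProduct.map_comp]
    simp
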